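/- The function G : ℝ → ℝ defined by G(x) = sgn(x)(1 − e^{−|x|}) is differentiable at every point of ℝ, with derivative G'(x) = e^{−|x|}, and it satisfies the functional equation (FE). -/
import Mathlib

open Real

/-- A function `G : ℝ → ℝ` satisfies the functional equation (FE) if it is
differentiable and for all `x, y, z` with `x + y + z = 0`,
`G'(x)(G(y)+G(z)) + G'(y)(G(z)+G(x)) + G'(z)(G(x)+G(y)) = 0`. -/
def FE (G : ℝ → ℝ) : Prop :=
  Differentiable ℝ G ∧ ∀ x y z : ℝ, x + y + z = 0 →
    deriv G x * (G y + G z) + deriv G y * (G z + G x) + deriv G z * (G x + G y) = 0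

noncomputable def myG : ℝ → ℝ := fun x => Real.sign x * (1 - Real.exp (-|x|))

lemma Gge {x : ℝ} (hx : 0 ≤ x) : myG x = 1 - Real.exp (-x) := by
  rcases eq_or_lt_of_le hx with h | h
  · simp [myG, ← h]
  · simp [myG, Real.sign_of_pos h, abs_of_pos h]

lemma Gle {x : ℝ} (hx : x ≤ 0) : myG x = Real.exp x - 1 := by
  rcases eq_or_lt_of_le hx with h | h
  · simp [myG, h]
  · simp [myG, Real.sign_of_neg h, abs_of_neg h]

lemma hd1 (x : ℝ) : HasDerivAt (fun t : ℝ => 1 - Real.exp (-t)) (Real.exp (-x)) x := by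
  simpa using ((Real.hasDerivAt_exp (-x)).comp x (hasDerivAt_neg x)).const_sub 1

lemma hd2 (x : ℝ) : HasDerivAt (fun t : ℝ => Real.exp t - 1) (Real.exp x) x := by
  simpa using (Real.hasDerivAt_exp x).sub_const 1

lemma hdG (x : ℝ) : HasDerivAt myG (Real.exp (-|x|)) x := by
  rcases lt_trichotomy x 0 with h | h | h
  · rw [abs_of_neg h, neg_neg]
    refine (hd2 x).congr_of_eventuallyEq ?_
    filter_upwards [Iio_mem_nhds h] with t ht
    exact Gle (le_of_lt ht)
  · subst h
    have hl : HasDerivWithinAt myG 1 (Set.Iic 0) 0 := by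
      refine ((hd2 0).hasDerivWithinAt.congr (fun t ht => Gle ht) (Gle le_rfl)).congr_deriv ?_
      simp
    have hr : HasDerivWithinAt myG 1 (Set.Ici 0) 0 := by
      refine ((hd1 0).hasDerivWithinAt.congr (fun t ht => Gge ht) (Gge le_rfl)).congr_deriv ?_
      simp
    have := hl.union hr
    rw [Set.Iic_union_Ici] at this
    simpa using this.hasDerivAt (by simp)
  · rw [abs_of_pos h]
    refine (hd1 x).congr_of_eventuallyEq ?_
    filter_upwards [Ioi_mem_nhds h] with t ht
    exact Gge (le_of_lt ht)

lemma key1 (x y z : ℝ) (h : x + y + z = 0) (hx : 0 ≤ x) (hy : 0 ≤ y) (hz : z ≤ 0) :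
    Real.exp (-|x|) * (myG y + myG z) + Real.exp (-|y|) * (myG z + myG x)
      + Real.exp (-|z|) * (myG x + myG y) = 0 := by
  rw [abs_of_nonneg hx, abs_of_nonneg hy, abs_of_nonpos hz, neg_neg,
    Gge hx, Gge hy, Gle hz]
  rw [show z = -x + -y by linarith, Real.exp_add, ← Real.exp_add]
  ring_nf
  rw [show -x - y = -x + -y by ring, Real.exp_add]
  ring

lemma key2 (x y z : ℝ) (h : x + y + z = 0) (hx : x ≤ 0) (hy : y ≤ 0) (hz : 0 ≤ z) :
    Real.exp (-|x|) * (myG y + myG z) + Real.exp (-|y|) * (myG z + myG x)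
      + Real.exp (-|z|) * (myG x + myG y) = 0 := by
  rw [abs_of_nonpos hx, abs_of_nonpos hy, abs_of_nonneg hz, neg_neg, neg_neg,
    Gle hx, Gle hy, Gge hz]
  rw [show -z = x + y by linarith, Real.exp_add]
  ring

lemma key (x y z : ℝ) (h : x + y + z = 0) :
    Real.exp (-|x|) * (myG y + myG z) + Real.exp (-|y|) * (myG z + myG x)
      + Real.exp (-|z|) * (myG x + myG y) = 0 := by
  rcases le_total x 0 with hx | hx <;> rcases le_total y 0 with hy | hy <;>
    rcases le_total z 0 with hz | hz
  · have h1 : x = 0 := by linarith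
    have h2 : y = 0 := by linarith
    have h3 : z = 0 := by linarith
    subst h1; subst h2; subst h3
    simp [myG]
  · exact key2 x y z h hx hy hz
  · linear_combination key2 z x y (by linarith) hz hx hy
  · linear_combination key1 y z x (by linarith) hy hz hx
  · linear_combination key2 y z x (by linarith) hy hz hx
  · linear_combination key1 z x y (by linarith) hz hx hy
  · exact key1 x y z h hx hy hz
  · have h1 : x = 0 := by linarith
    have h2 : y = 0 := by linarith
    have h3 : z = 0 := by linarith
    subst h1; subst h2; subst h3
    simp [myG]

theorem stmt10 :
    (∀ x : ℝ, HasDerivAt (fun x : ℝ => Real.sign x * (1 - Real.exp (-|x|)))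
      (Real.exp (-|x|)) x) ∧
    FE (fun x : ℝ => Real.sign x * (1 - Real.exp (-|x|))) := by
  have hG : (fun x : ℝ => Real.sign x * (1 - Real.exp (-|x|))) = myG := rfl
  rw [hG]
  refine ⟨hdG, fun x => (hdG x).differentiableAt, fun x y z h => ?_⟩
  rw [(hdG x).deriv, (hdG y).deriv, (hdG z).deriv]
  exact key x y z h
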